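/- For every integer k ≥ 1, the quantity α(k) = (1/2^k) · Σ_{j=0}^{k} C(k,j) · k / max{1, min{j, k−j}} satisfies α(k) ≤ 4. -/
import Mathlib
open Finset

private lemma central_le (m : ℕ) (hm : 9 ≤ m) : m.choose (m / 2) ≤ 2 ^ (m - 2) := by
  induction m, hm using Nat.le_induction with
  | base => decide
  | succ n hn ih =>
    obtain ⟨t, rfl⟩ : ∃ t, n = t + 1 := ⟨n - 1, by omega⟩
    have h2 : (t + 1 + 1) / 2 = t / 2 + 1 := by omega
    have he : t + 1 + 1 - 2 = (t - 1) + 1 := by omega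
    have ih' : (t + 1).choose ((t + 1) / 2) ≤ 2 ^ (t - 1) := by
      have h3 : t + 1 - 2 = t - 1 := by omega
      rwa [h3] at ih
    have ha := Nat.choose_le_middle (t / 2) (t + 1)
    have hb := Nat.choose_le_middle (t / 2 + 1) (t + 1)
    rw [h2, Nat.choose_succ_succ, he, pow_succ]
    simp only [Nat.succ_eq_add_one]
    omega

private lemma sum_split {M : Type*} [AddCommMonoid M] (F : ℕ → M) {a b c : ℕ}
    (hab : a ≤ b) (hbc : b ≤ c) :
    ∑ j ∈ Ico a c, F j = ∑ j ∈ Ico a b, F j + ∑ j ∈ Ico b c, F j :=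
  (Finset.sum_Ico_consecutive F hab hbc).symm

private lemma natBound (k g : ℕ) (hbig : 8 ≤ k) (hg : (k+1)/2 = g+1) :
    2*k + (∑ j ∈ Ico 1 (g+1), (k.choose j + 2 * k.choose (j+1)))
        + ∑ j ∈ Ico (g+1) k, (k.choose j + 2 * k.choose (j-1)) ≤ 4 * 2^k := by
  have R1 : ∑ j ∈ Ico 1 (g+1), k.choose (j+1) = ∑ j ∈ Ico 2 (g+2), k.choose j := by
    rw [Finset.sum_Ico_eq_sum_range, Finset.sum_Ico_eq_sum_range]
    rw [show g+1-1 = g by omega, show g+2-2 = g by omega]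
    exact Finset.sum_congr rfl fun i _ => by congr 1; omega
  have R2 : ∑ j ∈ Ico (g+1) k, k.choose (j-1) = ∑ j ∈ Ico g (k-1), k.choose j := by
    rw [Finset.sum_Ico_eq_sum_range, Finset.sum_Ico_eq_sum_range]
    rw [show k-(g+1) = k-1-g by omega]
    exact Finset.sum_congr rfl fun i _ => by congr 1; omega
  rw [Finset.sum_add_distrib, Finset.sum_add_distrib, ← Finset.mul_sum, ← Finset.mul_sum,
    R1, R2]
  have q1 : ∑ j ∈ Ico 1 (g+1), k.choose j + ∑ j ∈ Ico (g+1) k, k.choose j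
      = ∑ j ∈ Ico 1 k, k.choose j :=
    Finset.sum_Ico_consecutive _ (by omega) (by omega)
  have q2 : 1 + (∑ j ∈ Ico 1 k, k.choose j + 1) = 2^k := by
    have e := Nat.sum_range_choose k
    rw [Finset.range_eq_Ico, sum_split _ (by omega : (0:ℕ) ≤ 1) (by omega : 1 ≤ k+1),
      sum_split _ (by omega : (1:ℕ) ≤ k) (by omega : k ≤ k+1)] at e
    have s0 : ∑ j ∈ Ico 0 1, k.choose j = 1 := by simp
    have sk : ∑ j ∈ Ico k (k+1), k.choose j = 1 := by
      rw [Finset.sum_Ico_eq_sum_range]; simp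
    omega
  have q3 : ∑ j ∈ Ico 1 k, k.choose j
      = k + (∑ j ∈ Ico 2 (k-1), k.choose j + k) := by
    rw [sum_split _ (by omega : (1:ℕ) ≤ 2) (by omega : 2 ≤ k),
      sum_split _ (by omega : (2:ℕ) ≤ k-1) (by omega : k-1 ≤ k)]
    have s1 : ∑ j ∈ Ico 1 2, k.choose j = k := by simp
    have s2 : ∑ j ∈ Ico (k-1) k, k.choose j = k := by
      rw [Finset.sum_Ico_eq_sum_range, show k-(k-1) = 1 by omega]
      simp
      rw [← Nat.choose_symm (by omega : k-1 ≤ k), show k - (k-1) = 1 by omega,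
        Nat.choose_one_right]
    omega
  have q4 : ∑ j ∈ Ico 2 (g+2), k.choose j + ∑ j ∈ Ico (g+2) (k-1), k.choose j
      = ∑ j ∈ Ico 2 (k-1), k.choose j :=
    Finset.sum_Ico_consecutive _ (by omega) (by omega)
  have q5 : ∑ j ∈ Ico g (k-1), k.choose j
      = k.choose g + (k.choose (g+1) + ∑ j ∈ Ico (g+2) (k-1), k.choose j) := by
    rw [Finset.sum_eq_sum_Ico_succ_bot (by omega : g < k-1),
      Finset.sum_eq_sum_Ico_succ_bot (by omega : g+1 < k-1)]
  have q6 : k.choose g + k.choose (g+1) ≤ 2^(k-1) := by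
    have h := central_le (k+1) (by omega)
    rw [hg, Nat.choose_succ_succ, show k+1-2 = k-1 by omega] at h
    exact h
  have q7 : 2^k = 2^(k-1)*2 := by
    rw [← pow_succ]; congr 1; omega
  omega

private lemma term_left (k j : ℕ) (h1 : 1 ≤ j) (h2 : 2*j < k) :
    (k.choose j : ℝ) * k / ((max 1 (min j (k - j)) : ℕ) : ℝ)
      ≤ ((k.choose j + 2 * k.choose (j+1) : ℕ) : ℝ) := by
  rw [min_eq_left (by omega : j ≤ k - j), max_eq_right (by omega : 1 ≤ j)]
  have hj : (0:ℝ) < (j:ℝ) := by exact_mod_cast h1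
  rw [div_le_iff₀ hj]
  have hnat : k.choose j * k ≤ (k.choose j + 2 * k.choose (j+1)) * j := by
    have hid : k.choose (j+1) * (j+1) = k.choose j * (k - j) := Nat.choose_succ_right_eq k j
    calc k.choose j * k = k.choose j * j + k.choose j * (k - j) := by
          rw [← Nat.mul_add, show j + (k-j) = k by omega]
      _ = k.choose j * j + k.choose (j+1) * (j+1) := by rw [hid]
      _ ≤ k.choose j * j + k.choose (j+1) * (2*j) :=
          Nat.add_le_add_left (Nat.mul_le_mul_left _ (by omega)) _
      _ = (k.choose j + 2 * k.choose (j+1)) * j := by ring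
  exact_mod_cast hnat

private lemma term_right (k j : ℕ) (h1 : 1 ≤ j) (h2 : k ≤ 2*j) (h3 : j < k) :
    (k.choose j : ℝ) * k / ((max 1 (min j (k - j)) : ℕ) : ℝ)
      ≤ ((k.choose j + 2 * k.choose (j-1) : ℕ) : ℝ) := by
  rw [min_eq_right (by omega : k - j ≤ j), max_eq_right (by omega : 1 ≤ k - j)]
  have ha : (0:ℝ) < ((k-j : ℕ):ℝ) := by exact_mod_cast (by omega : 0 < k - j)
  rw [div_le_iff₀ ha]
  have hnat : k.choose j * k ≤ (k.choose j + 2 * k.choose (j-1)) * (k-j) := by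
    have hid := Nat.choose_succ_right_eq k (j-1)
    rw [show j-1+1 = j by omega, show k - (j-1) = (k-j)+1 by omega] at hid
    calc k.choose j * k = k.choose j * (k-j) + k.choose j * j := by
          rw [← Nat.mul_add, show (k-j) + j = k by omega]
      _ = k.choose j * (k-j) + k.choose (j-1) * ((k-j)+1) := by rw [hid]
      _ ≤ k.choose j * (k-j) + k.choose (j-1) * (2*(k-j)) :=
          Nat.add_le_add_left (Nat.mul_le_mul_left _ (by omega)) _
      _ = (k.choose j + 2 * k.choose (j-1)) * (k-j) := by ring
  exact_mod_cast hnat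

set_option maxHeartbeats 1000000 in
open Finset in
/-- For every k ≥ 1, α(k) = 2^{-k} Σ_j C(k,j)·k/max{1,min{j,k−j}} ≤ 4. -/
theorem alpha_le_four (k : ℕ) (hk : 1 ≤ k) :
    (1 / 2 ^ k : ℝ) *
      ∑ j ∈ Finset.range (k + 1),
        (k.choose j : ℝ) * k / ((max 1 (min j (k - j)) : ℕ) : ℝ) ≤ 4 := by
  have h2k : (0:ℝ) < 2 ^ k := by positivity
  rw [one_div, inv_mul_le_iff₀ h2k]
  rcases lt_or_ge k 8 with hsmall | hbig
  · interval_cases k <;> norm_num [Finset.sum_range_succ, Nat.choose]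
  · obtain ⟨g, hg⟩ : ∃ g, (k+1)/2 = g + 1 := ⟨(k+1)/2 - 1, by omega⟩
    calc ∑ j ∈ Finset.range (k + 1),
          (k.choose j : ℝ) * k / ((max 1 (min j (k - j)) : ℕ) : ℝ)
        = (∑ j ∈ Ico 0 1, (k.choose j : ℝ) * k / ((max 1 (min j (k - j)) : ℕ) : ℝ))
          + ((∑ j ∈ Ico 1 (g+1), (k.choose j : ℝ) * k / ((max 1 (min j (k - j)) : ℕ) : ℝ))
          + ((∑ j ∈ Ico (g+1) k, (k.choose j : ℝ) * k / ((max 1 (min j (k - j)) : ℕ) : ℝ))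
          + ∑ j ∈ Ico k (k+1), (k.choose j : ℝ) * k / ((max 1 (min j (k - j)) : ℕ) : ℝ))) := by
          rw [Finset.range_eq_Ico,
            sum_split _ (show (0:ℕ) ≤ 1 by omega) (show (1:ℕ) ≤ k+1 by omega),
            sum_split _ (show (1:ℕ) ≤ g+1 by omega) (show g+1 ≤ k+1 by omega),
            sum_split _ (show g+1 ≤ k by omega) (show k ≤ k+1 by omega)]
      _ ≤ (k:ℝ)
          + ((∑ j ∈ Ico 1 (g+1), ((k.choose j + 2 * k.choose (j+1) : ℕ) : ℝ))
          + ((∑ j ∈ Ico (g+1) k, ((k.choose j + 2 * k.choose (j-1) : ℕ) : ℝ))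
          + (k:ℝ))) := by
          gcongr ?_ + (?_ + (?_ + ?_))
          · rw [Finset.sum_Ico_eq_sum_range]; norm_num
          · exact Finset.sum_le_sum fun j hj => by
              rw [Finset.mem_Ico] at hj
              exact term_left k j hj.1 (by omega)
          · exact Finset.sum_le_sum fun j hj => by
              rw [Finset.mem_Ico] at hj
              exact term_right k j (by omega) (by omega) hj.2
          · rw [Finset.sum_Ico_eq_sum_range]
            norm_num [Nat.sub_self]
      _ = ((2*k + (∑ j ∈ Ico 1 (g+1), (k.choose j + 2 * k.choose (j+1)))
          + ∑ j ∈ Ico (g+1) k, (k.choose j + 2 * k.choose (j-1)) : ℕ) : ℝ) := by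
          push_cast
          ring
      _ ≤ ((4 * 2^k : ℕ) : ℝ) := by
          exact_mod_cast natBound k g hbig hg
      _ = 2^k * 4 := by push_cast; ring
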